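/- If a transition system has a finite set of control states, a finite stack alphabet, and each transition either pushes one symbol, pops one symbol, or leaves the stack unchanged (depending only on the control state and top stack symbol), then the set of reachable configurations from a given initial configuration forms a regular set of stack words per control state, and reachability of a given configuration is decidable. -/

import Mathlib

/-- Stack effect of a pushdown rule: push one symbol, pop one symbol, or
leave the stack unchanged. -/
inductive StackOp (Γ : Type*)
  | push (γ : Γ)
  | pop
  | id

/-- A pushdown rule: depending only on the control state and the top stack
symbol (`none` meaning the stack is empty), move to a new control state and
perform a stack operation. -/
structure PDSRule (Q Γ : Type*) where
  src : Q
  top : Option Γ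
  dst : Q
  op : StackOp Γ

/-- How a single rule transforms a configuration. -/
def PDSRule.Applies {Q Γ : Type*} (r : PDSRule Q Γ)
    (c c' : Q × List Γ) : Prop :=
  c.1 = r.src ∧ c'.1 = r.dst ∧
    match r.top, c.2 with
    | some γ, γ₀ :: w =>
        γ₀ = γ ∧
        match r.op with
        | .push γ' => c'.2 = γ' :: γ₀ :: w
        | .pop => c'.2 = w
        | .id => c'.2 = γ₀ :: w
    | none, [] =>
        match r.op with
        | .push γ' => c'.2 = [γ']
        | .pop => False
        | .id => c'.2 = []
    | _, _ => False

/-- The transition relation generated by a finite set of rules. -/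
def PDSStep {Q Γ : Type*} (rules : List (PDSRule Q Γ)) :
    Q × List Γ → Q × List Γ → Prop :=
  fun c c' => ∃ r ∈ rules, r.Applies c c'

namespace PDSProof

variable {Q Γ : Type*}

/-- States of the saturation P-automaton. -/
abbrev PState (Q Γ : Type*) (init : Q × List Γ) : Type _ :=
  Q ⊕ (Q × Γ) ⊕ Fin (init.2.length + 1)

def pfinal (init : Q × List Γ) : PState Q Γ init := Sum.inr (Sum.inr (Fin.last _))

/-- Saturated edge relation of the post*-automaton (with ε-edges absorbed on
the left). -/
inductive PEdge (rules : List (PDSRule Q Γ)) (init : Q × List Γ) :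
    PState Q Γ init → Option Γ → PState Q Γ init → Prop
  | chain (i : Fin init.2.length) :
      PEdge rules init (Sum.inr (Sum.inr i.castSucc)) (some (init.2.get i))
        (Sum.inr (Sum.inr i.succ))
  | start : PEdge rules init (Sum.inl init.1) none (Sum.inr (Sum.inr 0))
  | absorb {s t u a} : PEdge rules init s none t → PEdge rules init t a u →
      PEdge rules init s a u
  | rid {r s γ} (hr : r ∈ rules) (ht : r.top = some γ) (hop : r.op = .id)
      (h : PEdge rules init (Sum.inl r.src) (some γ) s) :
      PEdge rules init (Sum.inl r.dst) (some γ) s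
  | rpop {r s γ} (hr : r ∈ rules) (ht : r.top = some γ) (hop : r.op = .pop)
      (h : PEdge rules init (Sum.inl r.src) (some γ) s) :
      PEdge rules init (Sum.inl r.dst) none s
  | rpushA {r γ'} (hr : r ∈ rules) (hop : r.op = .push γ') :
      PEdge rules init (Sum.inl r.dst) (some γ') (Sum.inr (Sum.inl (r.dst, γ')))
  | rpushB {r s γ γ'} (hr : r ∈ rules) (ht : r.top = some γ) (hop : r.op = .push γ')
      (h : PEdge rules init (Sum.inl r.src) (some γ) s) :
      PEdge rules init (Sum.inr (Sum.inl (r.dst, γ'))) (some γ) s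
  | eid {r} (hr : r ∈ rules) (ht : r.top = none) (hop : r.op = .id)
      (h : PEdge rules init (Sum.inl r.src) none (pfinal init)) :
      PEdge rules init (Sum.inl r.dst) none (pfinal init)
  | epush {r γ'} (hr : r ∈ rules) (ht : r.top = none) (hop : r.op = .push γ')
      (h : PEdge rules init (Sum.inl r.src) none (pfinal init)) :
      PEdge rules init (Sum.inr (Sum.inl (r.dst, γ'))) none (pfinal init)

/-- Acceptance of a word from a state (final state is `pfinal`, with a
possible trailing ε-edge). -/
def PAccept (rules : List (PDSRule Q Γ)) (init : Q × List Γ) :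
    PState Q Γ init → List Γ → Prop
  | s, [] => s = pfinal init ∨ PEdge rules init s none (pfinal init)
  | s, γ :: w => ∃ t, PEdge rules init s (some γ) t ∧ PAccept rules init t w

variable {rules : List (PDSRule Q Γ)} {init : Q × List Γ}

lemma accept_absorb {s t : PState Q Γ init} {w : List Γ}
    (h : PEdge rules init s none t) (ha : PAccept rules init t w) :
    PAccept rules init s w := by
  cases w with
  | nil =>
      rcases ha with rfl | ha
      · exact Or.inr h
      · exact Or.inr (PEdge.absorb h ha)
  | cons γ w =>
      obtain ⟨u, h1, h2⟩ := ha
      exact ⟨u, PEdge.absorb h h1, h2⟩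

lemma accept_chain (i : ℕ) (hle : i ≤ init.2.length) :
    PAccept rules init (Sum.inr (Sum.inr ⟨i, Nat.lt_succ_of_le hle⟩)) (init.2.drop i) := by
  rcases eq_or_lt_of_le hle with heq | hlt
  · subst heq
    rw [List.drop_length]
    exact Or.inl rfl
  · have ih := accept_chain (i + 1) hlt
    rw [← (List.getElem_cons_drop hlt : init.2.get ⟨i, hlt⟩ :: init.2.drop (i + 1) = init.2.drop i)]
    exact ⟨_, PEdge.chain ⟨i, hlt⟩, ih⟩
  termination_by init.2.length - i

lemma accept_init : PAccept rules init (Sum.inl init.1) init.2 := by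
  have h := accept_chain (rules := rules) (init := init) 0 (Nat.zero_le _)
  rw [List.drop_zero] at h
  exact accept_absorb PEdge.start h

/-- Forward direction: every reachable configuration is accepted. -/
lemma reach_accept {c : Q × List Γ}
    (h : Relation.ReflTransGen (PDSStep rules) init c) :
    PAccept rules init (Sum.inl c.1) c.2 := by
  induction h with
  | refl => exact accept_init
  | @tail b c _ hstep ih =>
      obtain ⟨r, hr, h1, h2, h3⟩ := hstep
      obtain ⟨src, top, dst, op⟩ := r
      cases top with
      | some γ =>
          cases hb : b.2 with
          | nil => rw [hb] at h3; exact h3.elim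
          | cons γ₀ w =>
            rw [hb] at h3 ih
            obtain ⟨hγ, h3⟩ := h3
            subst hγ
            rw [h1] at ih
            obtain ⟨s, e1, acc⟩ := ih
            rw [h2]
            cases op with
            | push γ'' =>
                rw [h3]
                exact ⟨_, PEdge.rpushA hr rfl, s, PEdge.rpushB hr rfl rfl e1, acc⟩
            | pop =>
                rw [h3]
                exact accept_absorb (PEdge.rpop hr rfl rfl e1) acc
            | id =>
                rw [h3]
                exact ⟨s, PEdge.rid hr rfl rfl e1, acc⟩
      | none =>
          cases hb : b.2 with
          | cons γ₀ w => rw [hb] at h3; exact h3.elim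
          | nil =>
            rw [hb] at h3
            rw [hb, h1] at ih
            have e : PEdge rules init (Sum.inl src) none (pfinal init) := by
              rcases ih with heq | e
              · exact absurd heq (by simp [pfinal])
              · exact e
            rw [h2]
            cases op with
            | push γ' =>
                have h3' : c.2 = [γ'] := h3
                rw [h3']
                exact ⟨_, PEdge.rpushA hr rfl, Or.inr (PEdge.epush hr rfl rfl e)⟩
            | pop => exact (h3 : False).elim
            | id =>
                have h3' : c.2 = ([] : List Γ) := h3
                rw [h3']
                exact Or.inr (PEdge.eid hr rfl rfl e)

/-- Invariant for the backward direction. -/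
def CC (rules : List (PDSRule Q Γ)) (init : Q × List Γ) :
    PState Q Γ init → List Γ → Prop
  | Sum.inl q, w => Relation.ReflTransGen (PDSStep rules) init (q, w)
  | Sum.inr (Sum.inl pγ), w =>
      Relation.ReflTransGen (PDSStep rules) init (pγ.1, pγ.2 :: w)
  | Sum.inr (Sum.inr i), w => w = init.2.drop i

lemma mk_step {r : PDSRule Q Γ} (hr : r ∈ rules) {c c' : Q × List Γ}
    (h : r.Applies c c') : PDSStep rules c c' := ⟨r, hr, h⟩

lemma cc_edge {s t : PState Q Γ init} {a : Option Γ}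
    (h : PEdge rules init s a t) :
    ∀ w, CC rules init t w → CC rules init s (a.elim w (· :: w)) := by
  induction h with
  | chain i =>
      intro w hw
      simp only [CC, Option.elim] at hw ⊢
      rw [hw]
      have := (List.getElem_cons_drop i.2 : init.2.get i :: init.2.drop (i.1 + 1) = init.2.drop i)
      simp only [Fin.val_succ, Fin.coe_castSucc] at *
      exact this
  | start =>
      intro w hw
      simp only [CC, Option.elim] at hw ⊢
      rw [hw]
      simp only [Fin.val_zero, List.drop_zero]
      exact Relation.ReflTransGen.refl
  | absorb h1 h2 ih1 ih2 =>
      intro w hw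
      exact ih1 _ (ih2 w hw)
  | rid hr ht hop h ih =>
      intro w hw
      simp only [CC, Option.elim] at *
      refine Relation.ReflTransGen.tail (ih w hw) (mk_step hr ?_)
      refine ⟨rfl, rfl, ?_⟩
      simp [PDSRule.Applies, ht, hop]
  | rpop hr ht hop h ih =>
      intro w hw
      simp only [CC, Option.elim] at *
      refine Relation.ReflTransGen.tail (ih w hw) (mk_step hr ?_)
      refine ⟨rfl, rfl, ?_⟩
      simp [PDSRule.Applies, ht, hop]
  | rpushA hr hop =>
      intro w hw
      simp only [CC, Option.elim] at *
      exact hw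
  | rpushB hr ht hop h ih =>
      intro w hw
      simp only [CC, Option.elim] at *
      refine Relation.ReflTransGen.tail (ih w hw) (mk_step hr ?_)
      refine ⟨rfl, rfl, ?_⟩
      simp [PDSRule.Applies, ht, hop]
  | eid hr ht hop h ih =>
      intro w hw
      simp only [CC, Option.elim, pfinal, Fin.val_last, List.drop_length] at *
      subst hw
      refine Relation.ReflTransGen.tail (ih [] rfl) (mk_step hr ?_)
      refine ⟨rfl, rfl, ?_⟩
      simp [PDSRule.Applies, ht, hop]
  | epush hr ht hop h ih =>
      intro w hw
      simp only [CC, Option.elim, pfinal, Fin.val_last, List.drop_length] at *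
      subst hw
      refine Relation.ReflTransGen.tail (ih [] rfl) (mk_step hr ?_)
      refine ⟨rfl, rfl, ?_⟩
      simp [PDSRule.Applies, ht, hop]

lemma cc_accept : ∀ {w : List Γ} {s : PState Q Γ init},
    PAccept rules init s w → CC rules init s w := by
  intro w
  induction w with
  | nil =>
      intro s h
      rcases h with rfl | h
      · simp [CC, pfinal, List.drop_length]
      · have := cc_edge h []
        simp only [Option.elim] at this
        exact this (by simp [CC, pfinal, List.drop_length])
  | cons γ w ih =>
      intro s h
      obtain ⟨t, h1, h2⟩ := h
      have := cc_edge h1 w (ih h2)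
      simpa using this

/-- The language accepted from state `Sum.inl q` is exactly reachability. -/
lemma accept_iff_reach (q : Q) (w : List Γ) :
    PAccept rules init (Sum.inl q) w ↔
      Relation.ReflTransGen (PDSStep rules) init (q, w) := by
  constructor
  · intro h
    exact cc_accept h
  · intro h
    exact reach_accept (c := (q, w)) h

end PDSProof
/-- for a pushdown system with finite control states and finite
stack alphabet, the reachable configurations form, per control state, a
regular set of stack words (recognized by some DFA), and reachability of a
given configuration is decidable. -/
theorem stmt0 {Q Γ : Type*} [Fintype Q] [DecidableEq Q] [Fintype Γ] [DecidableEq Γ]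
    (rules : List (PDSRule Q Γ)) (init : Q × List Γ) :
    (∀ q : Q, ∃ (n : ℕ) (M : DFA Γ (Fin n)), ∀ w : List Γ,
      w ∈ M.accepts ↔ Relation.ReflTransGen (PDSStep rules) init (q, w)) ∧
    Nonempty (DecidablePred fun c : Q × List Γ =>
      Relation.ReflTransGen (PDSStep rules) init c) := by
  constructor
  · intro q
    haveI : Fintype (Set (PDSProof.PState Q Γ init)) := Fintype.ofFinite _
    set S := PDSProof.PState Q Γ init with hS
    let e : Set S ≃ Fin (Fintype.card (Set S)) := Fintype.equivFin (Set S)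
    let M : DFA Γ (Fin (Fintype.card (Set S))) :=
      { step := fun i γ => e {t | ∃ s ∈ e.symm i, PDSProof.PEdge rules init s (some γ) t}
        start := e {Sum.inl q}
        accept := {i | ∃ s ∈ e.symm i, PDSProof.PAccept rules init s []} }
    refine ⟨_, M, ?_⟩
    have key : ∀ (w : List Γ) (T : Set S),
        (M.evalFrom (e T) w ∈ M.accept ↔ ∃ s ∈ T, PDSProof.PAccept rules init s w) := by
      intro w
      induction w with
      | nil =>
          intro T
          show (∃ s ∈ e.symm (e T), _) ↔ _
          rw [e.symm_apply_apply]
      | cons γ w ih =>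
          intro T
          have hstep : M.evalFrom (e T) (γ :: w) =
              M.evalFrom (e {t | ∃ s ∈ T, PDSProof.PEdge rules init s (some γ) t}) w := by
            show M.evalFrom (M.step (e T) γ) w = _
            simp only [M, e.symm_apply_apply]
          rw [hstep, ih]
          constructor
          · rintro ⟨t, ⟨s, hs, hst⟩, ht⟩
            exact ⟨s, hs, t, hst, ht⟩
          · rintro ⟨s, hs, t, hst, ht⟩
            exact ⟨t, ⟨s, hs, hst⟩, ht⟩
    intro w
    rw [DFA.mem_accepts]
    show M.evalFrom (e {Sum.inl q}) w ∈ M.accept ↔ _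
    rw [key w {Sum.inl q}]
    simp only [Set.mem_singleton_iff, exists_eq_left]
    exact PDSProof.accept_iff_reach q w
  · exact ⟨fun _ => Classical.propDecidable _⟩
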